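/- Let L > 0, δ > 0, and m ∈ ℝ. Then (1 − tanh(m/δ))² e^{mL} − (1 + tanh(m/δ))² e^{−mL} = 0 if and only if m·(L − 2/δ) = 0. In particular, if δ ≠ 2/L, then (1 − tanh(m/δ))² e^{mL} = (1 + tanh(m/δ))² e^{−mL} holds if and only if m = 0. -/

import Mathlib

lemma tanh_aux (z : ℝ) :
    1 - Real.tanh z = Real.exp (-z) / Real.cosh z ∧
    1 + Real.tanh z = Real.exp z / Real.cosh z := by
  have hc := Real.cosh_pos z
  rw [Real.tanh_eq_sinh_div_cosh]
  constructor <;> field_simp <;> simp only [Real.cosh_sub_sinh, Real.cosh_add_sinh]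

/-- **Zero-mode matching identity for the regularized APS-type boundary
condition.** For `L > 0`, `δ > 0`, `m ∈ ℝ`:
`(1 − tanh(m/δ))² e^{mL} − (1 + tanh(m/δ))² e^{−mL} = 0 ↔ m(L − 2/δ) = 0`;
in particular, if `δ ≠ 2/L` then the matching equation holds iff `m = 0`. -/
theorem regularized_matching_criterion
    (L δ m : ℝ) (hL : 0 < L) (hδ : 0 < δ) :
    ((1 - Real.tanh (m / δ))^2 * Real.exp (m * L)
      - (1 + Real.tanh (m / δ))^2 * Real.exp (-(m * L)) = 0
      ↔ m * (L - 2 / δ) = 0) ∧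
    (δ ≠ 2 / L →
      ((1 - Real.tanh (m / δ))^2 * Real.exp (m * L)
          = (1 + Real.tanh (m / δ))^2 * Real.exp (-(m * L))
        ↔ m = 0)) := by
  set z := m / δ with hz
  obtain ⟨h1, h2⟩ := tanh_aux z
  have hc := Real.cosh_pos z
  have key : ((1 - Real.tanh z)^2 * Real.exp (m * L)
      - (1 + Real.tanh z)^2 * Real.exp (-(m * L)) = 0
      ↔ m * (L - 2 / δ) = 0) := by
    rw [h1, h2]
    have hrw : (Real.exp (-z) / Real.cosh z)^2 * Real.exp (m * L)
        - (Real.exp z / Real.cosh z)^2 * Real.exp (-(m * L))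
        = (Real.exp (m * L - 2 * z) - Real.exp (2 * z - m * L)) / (Real.cosh z)^2 := by
      rw [div_pow, div_pow]
      field_simp
      rw [pow_two, pow_two, ← Real.exp_add, ← Real.exp_add, ← Real.exp_add, ← Real.exp_add]
      ring_nf
    rw [hrw, div_eq_zero_iff, sub_eq_zero]
    have hc2 : (Real.cosh z)^2 ≠ 0 := by positivity
    simp only [hc2, or_false]
    rw [Real.exp_eq_exp]
    constructor
    · intro h
      have : m * L - 2 * z = 0 := by linarith
      rw [hz] at this
      field_simp at this ⊢
      linarith
    · intro h
      have : m * L - 2 * z = 0 := by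
        rw [hz]; field_simp; field_simp at h; linarith
      linarith
  refine ⟨key, fun hne => ?_⟩
  rw [← sub_eq_zero, key, mul_eq_zero]
  have : L - 2 / δ ≠ 0 := by
    intro h
    apply hne
    field_simp at h
    field_simp
    linarith
  simp [this]
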